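/- Let a ∈ ℝ with a ≠ 0 and η ∈ ℝ, and let x₋ := (x − |x|)/2 = min(x, 0). Then ∫₀^{2π} sin(s) · (a cos(s))₋ ds = 0, and ∫₀^{2π} cos(s) · (−η a cos(s) + (a cos(s))₋) ds = 0 if and only if η = 1/2. -/

import Mathlib

open Real

lemma min_half (z : ℝ) : min z 0 = (z - |z|) / 2 := by
  rcases le_or_gt z 0 with h | h
  · rw [min_eq_left h, abs_of_nonpos h]; ring
  · rw [min_eq_right h.le, abs_of_pos h]; ring

/-- If `f(2π - s) = -f s` then the integral over `[0, 2π]` vanishes. -/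
lemma refl_zero (f : ℝ → ℝ) (h : ∀ s, f (2 * π - s) = -f s) :
    ∫ s in (0:ℝ)..(2 * π), f s = 0 := by
  have h1 := intervalIntegral.integral_comp_sub_left (a := (0:ℝ)) (b := 2 * π) f (2 * π)
  simp only [h, sub_zero, sub_self] at h1
  rw [intervalIntegral.integral_neg] at h1
  linarith

/-- If `f(s + π) = -f s` and f is continuous then the integral over `[0, 2π]` vanishes. -/
lemma antiper_zero (f : ℝ → ℝ) (hf : Continuous f) (h : ∀ s, f (s + π) = -f s) :
    ∫ s in (0:ℝ)..(2 * π), f s = 0 := by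
  have h1 : (∫ s in (0:ℝ)..π, f s) + ∫ s in π..(2 * π), f s = ∫ s in (0:ℝ)..(2 * π), f s :=
    intervalIntegral.integral_add_adjacent_intervals (hf.intervalIntegrable _ _)
      (hf.intervalIntegrable _ _)
  have h2 := intervalIntegral.integral_comp_add_right (a := (0:ℝ)) (b := π) f π
  simp only [h, zero_add] at h2
  rw [intervalIntegral.integral_neg] at h2
  have hπ : π + π = 2 * π := by ring
  rw [hπ] at h2
  linarith

theorem stmt_8 (a : ℝ) (ha : a ≠ 0) (η : ℝ) :
    (∫ s in (0:ℝ)..(2 * π), Real.sin s * min (a * Real.cos s) 0) = 0 ∧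
    ((∫ s in (0:ℝ)..(2 * π),
        Real.cos s * (-η * a * Real.cos s + min (a * Real.cos s) 0)) = 0 ↔ η = 1 / 2) := by
  constructor
  · apply refl_zero
    intro s
    rw [Real.sin_two_pi_sub, Real.cos_two_pi_sub]
    ring
  · have key : (∫ s in (0:ℝ)..(2 * π),
        Real.cos s * (-η * a * Real.cos s + min (a * Real.cos s) 0)) = (a / 2 - η * a) * π := by
      have congr1 : (∫ s in (0:ℝ)..(2 * π),
          Real.cos s * (-η * a * Real.cos s + min (a * Real.cos s) 0)) =
          ∫ s in (0:ℝ)..(2 * π),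
            ((a / 2 - η * a) * Real.cos s ^ 2 - (|a| / 2) * (Real.cos s * |Real.cos s|)) := by
        apply intervalIntegral.integral_congr
        intro s _
        simp only [min_half, abs_mul]
        ring
      rw [congr1, intervalIntegral.integral_sub, intervalIntegral.integral_const_mul,
        intervalIntegral.integral_const_mul]
      · have hcc : (∫ s in (0:ℝ)..(2 * π), Real.cos s * |Real.cos s|) = 0 := by
          apply antiper_zero _ (Real.continuous_cos.mul Real.continuous_cos.abs)
          intro s
          show Real.cos (s + π) * |Real.cos (s + π)| = -(Real.cos s * |Real.cos s|)
          rw [Real.cos_add_pi]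
          simp
        rw [hcc, integral_cos_sq]
        simp [Real.sin_two_pi, Real.cos_two_pi]
      · exact (Continuous.intervalIntegrable (by continuity) _ _)
      · exact (Continuous.intervalIntegrable (by continuity) _ _)
    rw [key]
    constructor
    · intro h
      have hπ := Real.pi_ne_zero
      have : a / 2 - η * a = 0 := by
        rcases mul_eq_zero.mp h with h' | h'
        · exact h'
        · exact absurd h' hπ
      have : a * (1 / 2 - η) = 0 := by linarith
      rcases mul_eq_zero.mp this with h' | h'
      · exact absurd h' ha
      · linarith
    · intro h; rw [h]; ring
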